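/- Let v_1, …, v_I be positive reals and let (c_{ij})_{i<j} be nonpositive reals. Then Σ_{i<j} c_{ij} (v_j − v_i)² / (v_i v_j) ≤ 0, and consequently Σ_{i<j} (−c_{ij}) (v_j − v_i)²/(v_i v_j) ≥ Σ_{i<j} (−c_{ij}) (log v_j − log v_i)². -/

import Mathlib

lemma log_sq_le_key (x y : ℝ) (hx : 0 < x) (hy : 0 < y) :
    (Real.log x - Real.log y) ^ 2 ≤ (x - y) ^ 2 / (x * y) := by
  set t : ℝ := (Real.log x - Real.log y) / 2 with ht
  set u : ℝ := Real.exp t with hudef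
  have hupos : 0 < u := Real.exp_pos t
  have hu : u ^ 2 * y = x := by
    have : u ^ 2 = Real.exp (2 * t) := by
      rw [hudef, ← Real.exp_nat_mul]; ring_nf
    rw [this, ht]
    have h2 : (2 : ℝ) * ((Real.log x - Real.log y) / 2) = Real.log x - Real.log y := by ring
    rw [h2, Real.exp_sub, Real.exp_log hx, Real.exp_log hy]
    field_simp
  have hsinh : 2 * Real.sinh t = u - u⁻¹ := by
    rw [Real.sinh_eq, Real.exp_neg, ← hudef]; ring
  have habs : t ^ 2 ≤ Real.sinh t ^ 2 := by
    rcases le_or_gt 0 t with h | h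
    · have := Real.self_le_sinh_iff.mpr h
      nlinarith
    · have h' : (0:ℝ) ≤ -t := by linarith
      have := Real.self_le_sinh_iff.mpr h'
      rw [Real.sinh_neg] at this
      nlinarith
  rw [le_div_iff₀ (by positivity : (0:ℝ) < x * y)]
  have hlog : Real.log x - Real.log y = 2 * t := by rw [ht]; ring
  rw [hlog]
  have hx' : x = u ^ 2 * y := hu.symm
  have huinv : u * u⁻¹ = 1 := mul_inv_cancel₀ (ne_of_gt hupos)
  rw [hx']
  have hmul : t ^ 2 * (u * y) ^ 2 ≤ Real.sinh t ^ 2 * (u * y) ^ 2 :=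
    mul_le_mul_of_nonneg_right habs (sq_nonneg _)
  have h2 : (u - u⁻¹) * u = u ^ 2 - 1 := by field_simp
  have heq : Real.sinh t ^ 2 * (u * y) ^ 2 * 4 = (u ^ 2 * y - y) ^ 2 := by
    calc Real.sinh t ^ 2 * (u * y) ^ 2 * 4 = ((2 * Real.sinh t) * (u * y)) ^ 2 := by ring
      _ = ((u - u⁻¹) * (u * y)) ^ 2 := by rw [hsinh]
      _ = (((u - u⁻¹) * u) * y) ^ 2 := by ring
      _ = ((u ^ 2 - 1) * y) ^ 2 := by rw [h2]
      _ = (u ^ 2 * y - y) ^ 2 := by ring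
  nlinarith [hmul, heq]

theorem nodal_log_dissipation (I : ℕ) (v : Fin I → ℝ) (c : Fin I → Fin I → ℝ)
    (hv : ∀ i, 0 < v i) (hc : ∀ i j, i < j → c i j ≤ 0) :
    (∑ p ∈ Finset.univ.filter (fun p : Fin I × Fin I => p.1 < p.2),
        c p.1 p.2 * (v p.2 - v p.1) ^ 2 / (v p.1 * v p.2) ≤ 0) ∧
    (∑ p ∈ Finset.univ.filter (fun p : Fin I × Fin I => p.1 < p.2),
        (-(c p.1 p.2)) * (Real.log (v p.2) - Real.log (v p.1)) ^ 2
      ≤ ∑ p ∈ Finset.univ.filter (fun p : Fin I × Fin I => p.1 < p.2),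
        (-(c p.1 p.2)) * (v p.2 - v p.1) ^ 2 / (v p.1 * v p.2)) := by
  constructor
  · apply Finset.sum_nonpos
    intro p hp
    simp only [Finset.mem_filter] at hp
    have hc' := hc p.1 p.2 hp.2
    have h1 : 0 < v p.1 := hv p.1
    have h2 : 0 < v p.2 := hv p.2
    have : c p.1 p.2 * (v p.2 - v p.1) ^ 2 ≤ 0 :=
      mul_nonpos_of_nonpos_of_nonneg hc' (sq_nonneg _)
    exact div_nonpos_of_nonpos_of_nonneg this (le_of_lt (mul_pos h1 h2))
  · apply Finset.sum_le_sum
    intro p hp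
    simp only [Finset.mem_filter] at hp
    have hc' : 0 ≤ -(c p.1 p.2) := by linarith [hc p.1 p.2 hp.2]
    have key := log_sq_le_key (v p.2) (v p.1) (hv p.2) (hv p.1)
    have hcomm : (v p.2 - v p.1) ^ 2 / (v p.2 * v p.1)
        = (v p.2 - v p.1) ^ 2 / (v p.1 * v p.2) := by rw [mul_comm]
    rw [hcomm] at key
    calc (-(c p.1 p.2)) * (Real.log (v p.2) - Real.log (v p.1)) ^ 2
        ≤ (-(c p.1 p.2)) * ((v p.2 - v p.1) ^ 2 / (v p.1 * v p.2)) :=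
          mul_le_mul_of_nonneg_left key hc'
      _ = (-(c p.1 p.2)) * (v p.2 - v p.1) ^ 2 / (v p.1 * v p.2) := by
          rw [mul_div_assoc]
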